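/- arXiv:1210.2962 — 4 statements merged into one kernel-verified Lean document; each statement's English description precedes it below -/
import Mathlib

section
/- Let U ⊆ ℝ² be open and χ, φ : U → ℝ be C² functions whose Jacobian satisfies χ_x φ_y − χ_y φ_x ≡ 1 on U. Let Ω = {(x,y,p) ∈ ℝ³ : (x,y) ∈ U, χ_x(x,y) + p χ_y(x,y) ≠ 0} and let P : Ω → ℝ³ be the first prolongation P(x,y,p) = (χ(x,y), φ(x,y), q(x,y,p)) with q = (φ_x + p φ_y)/(χ_x + p χ_y). Write 𝔇q = q_x + p q_y + f q_p for a given continuous f : Ω → ℝ, and define f̄ along P by f̄(P(x,y,p)) := (𝔇q)(x,y,p)/(χ_x + p χ_y). Then there exists a function u₂ : Ω → ℝ such that for every (x,y,p) ∈ Ω and every tangent vector v = (v₁, v₂, v₃) ∈ ℝ³, writing (w₁, w₂, w₃) = DP_(x,y,p)(v) for the image under the total derivative of P, the following three identities hold with u₁ := 1/(χ_x + p χ_y) and u₃ := χ_y: (i) w₂ − q·w₁ = u₁·(v₂ − p v₁); (ii) w₃ − f̄(P(x,y,p))·w₁ = u₂·(v₂ − p v₁) + u₁²·(v₃ − f(x,y,p)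 v₁); (iii) w₁ = u₃·(v₂ − p v₁) + (1/u₁)·v₁. (That is, the pullback under P of the coframe (dȳ − ȳ' dx̄, dȳ' − f̄ dx̄, dx̄) is related to (dy − p dx, dp − f dx, dx) by the lower-triangular matrix with rows (u₁,0,0), (u₂,u₁²,0), (u₃,0,1/u₁).) -/
private lemma lin2 (L : (ℝ × ℝ) →L[ℝ] ℝ) (a b : ℝ) :
    L (a, b) = a * L (1, 0) + b * L (0, 1) := by
  have h : ((a, b) : ℝ × ℝ) = a • ((1:ℝ), (0:ℝ)) + b • ((0:ℝ), (1:ℝ)) := by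
    simp [Prod.ext_iff]
  rw [h, map_add, map_smul, map_smul, smul_eq_mul, smul_eq_mul]

private lemma lin3 (L : (ℝ × ℝ × ℝ) →L[ℝ] ℝ) (a b c : ℝ) :
    L (a, b, c) = a * L (1, 0, 0) + b * L (0, 1, 0) + c * L (0, 0, 1) := by
  have h : ((a, b, c) : ℝ × ℝ × ℝ) =
      a • ((1:ℝ), (0:ℝ), (0:ℝ)) + b • ((0:ℝ), (1:ℝ), (0:ℝ)) + c • ((0:ℝ), (0:ℝ), (1:ℝ)) := by
    simp [Prod.ext_iff]
  rw [h, map_add, map_add, map_smul, map_smul, map_smul]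
  simp [smul_eq_mul]

private lemma diff_pd {U : Set (ℝ × ℝ)} (hU : IsOpen U) {g : ℝ × ℝ → ℝ}
    (hg : ContDiffOn ℝ 2 g U) {z : ℝ × ℝ} (hz : z ∈ U) (v : ℝ × ℝ) :
    DifferentiableAt ℝ (fun w => fderiv ℝ g w v) z := by
  have h1 : ContDiffOn ℝ 1 (fun w => fderiv ℝ g w) U :=
    hg.fderiv_of_isOpen hU (by norm_num)
  have h2 : ContDiffOn ℝ 1 (fun w => fderiv ℝ g w v) U :=
    (ContinuousLinearMap.apply ℝ ℝ v).contDiff.comp_contDiffOn h1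
  exact (h2.differentiableOn one_ne_zero).differentiableAt (hU.mem_nhds hz)


/-- Partial derivative with respect to the first variable of a function on `ℝ²`. -/
noncomputable def pdx (g : ℝ × ℝ → ℝ) (z : ℝ × ℝ) : ℝ := fderiv ℝ g z (1, 0)

/-- Partial derivative with respect to the second variable of a function on `ℝ²`. -/
noncomputable def pdy (g : ℝ × ℝ → ℝ) (z : ℝ × ℝ) : ℝ := fderiv ℝ g z (0, 1)

/-- Partial derivative in the `x`-direction of a function on `ℝ³ = J¹(ℝ,ℝ)`. -/
noncomputable def Dx3 (g : ℝ × ℝ × ℝ → ℝ) (z : ℝ × ℝ × ℝ) : ℝ := fderiv ℝ g z (1, 0, 0)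

/-- Partial derivative in the `y`-direction of a function on `ℝ³ = J¹(ℝ,ℝ)`. -/
noncomputable def Dy3 (g : ℝ × ℝ × ℝ → ℝ) (z : ℝ × ℝ × ℝ) : ℝ := fderiv ℝ g z (0, 1, 0)

/-- Partial derivative in the `p`-direction of a function on `ℝ³ = J¹(ℝ,ℝ)`. -/
noncomputable def Dp3 (g : ℝ × ℝ × ℝ → ℝ) (z : ℝ × ℝ × ℝ) : ℝ := fderiv ℝ g z (0, 0, 1)

/-- The pullback under the first prolongation `P` of an area-preserving point
transformation of the coframe `(dȳ − ȳ' dx̄, dȳ' − f̄ dx̄, dx̄)` is related to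
`(dy − p dx, dp − f dx, dx)` by a lower-triangular matrix with rows
`(u₁,0,0), (u₂,u₁²,0), (u₃,0,1/u₁)` where `u₁ = 1/(χ_x + p χ_y)`, `u₃ = χ_y`. -/
theorem stmt1 (U : Set (ℝ × ℝ)) (hU : IsOpen U)
    (χ φ : ℝ × ℝ → ℝ) (hχ : ContDiffOn ℝ 2 χ U) (hφ : ContDiffOn ℝ 2 φ U)
    (hJ : ∀ z ∈ U, pdx χ z * pdy φ z - pdy χ z * pdx φ z = 1)
    (q : ℝ × ℝ × ℝ → ℝ)
    (hq : ∀ z : ℝ × ℝ × ℝ, q z =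
      (pdx φ (z.1, z.2.1) + z.2.2 * pdy φ (z.1, z.2.1)) /
        (pdx χ (z.1, z.2.1) + z.2.2 * pdy χ (z.1, z.2.1)))
    (P : ℝ × ℝ × ℝ → ℝ × ℝ × ℝ)
    (hP : ∀ z : ℝ × ℝ × ℝ, P z = (χ (z.1, z.2.1), φ (z.1, z.2.1), q z))
    (f : ℝ × ℝ × ℝ → ℝ)
    (hf : ContinuousOn f
      {z : ℝ × ℝ × ℝ | (z.1, z.2.1) ∈ U ∧
        pdx χ (z.1, z.2.1) + z.2.2 * pdy χ (z.1, z.2.1) ≠ 0}) :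
    ∃ u₂ : ℝ × ℝ × ℝ → ℝ, ∀ x y p : ℝ, (x, y) ∈ U →
      pdx χ (x, y) + p * pdy χ (x, y) ≠ 0 →
      ∀ v : ℝ × ℝ × ℝ,
        -- (i)  w₂ − q·w₁ = u₁·(v₂ − p v₁)
        ((fderiv ℝ P (x, y, p) v).2.1 - q (x, y, p) * (fderiv ℝ P (x, y, p) v).1 =
          (1 / (pdx χ (x, y) + p * pdy χ (x, y))) * (v.2.1 - p * v.1)) ∧
        -- (ii) w₃ − f̄(P(x,y,p))·w₁ = u₂·(v₂ − p v₁) + u₁²·(v₃ − f v₁)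
        ((fderiv ℝ P (x, y, p) v).2.2 -
            ((Dx3 q (x, y, p) + p * Dy3 q (x, y, p) + f (x, y, p) * Dp3 q (x, y, p)) /
              (pdx χ (x, y) + p * pdy χ (x, y))) * (fderiv ℝ P (x, y, p) v).1 =
          u₂ (x, y, p) * (v.2.1 - p * v.1) +
            (1 / (pdx χ (x, y) + p * pdy χ (x, y))) ^ 2 * (v.2.2 - f (x, y, p) * v.1)) ∧
        -- (iii) w₁ = u₃·(v₂ − p v₁) + (1/u₁)·v₁
        ((fderiv ℝ P (x, y, p) v).1 =
          pdy χ (x, y) * (v.2.1 - p * v.1) +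
            (1 / (1 / (pdx χ (x, y) + p * pdy χ (x, y)))) * v.1) := by

  classical
  refine ⟨fun z => Dy3 q z - ((Dx3 q z + z.2.2 * Dy3 q z + f z * Dp3 q z) /
      (pdx χ (z.1, z.2.1) + z.2.2 * pdy χ (z.1, z.2.1))) * pdy χ (z.1, z.2.1), ?_⟩
  intro x y p hxy hA v
  obtain ⟨v1, v2, v3⟩ := v
  have hJ' : pdx χ (x, y) * pdy φ (x, y) - pdy χ (x, y) * pdx φ (x, y) = 1 := hJ (x, y) hxy
  have hmem := hU.mem_nhds hxy
  have hχd : DifferentiableAt ℝ χ (x, y) :=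
    ((hχ.differentiableOn (by norm_num)).differentiableAt hmem)
  have hφd : DifferentiableAt ℝ φ (x, y) :=
    ((hφ.differentiableOn (by norm_num)).differentiableAt hmem)
  set πL : (ℝ × ℝ × ℝ) →L[ℝ] ℝ × ℝ :=
    (ContinuousLinearMap.fst ℝ ℝ (ℝ × ℝ)).prod
      ((ContinuousLinearMap.fst ℝ ℝ ℝ).comp (ContinuousLinearMap.snd ℝ ℝ (ℝ × ℝ))) with hπL
  have hπ : DifferentiableAt ℝ (fun z : ℝ × ℝ × ℝ => ((z.1, z.2.1) : ℝ × ℝ)) (x, y, p) :=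
    DifferentiableAt.prodMk differentiableAt_fst differentiableAt_snd.fst
  have hqd : DifferentiableAt ℝ q (x, y, p) := by
    have hqeq : q = fun z : ℝ × ℝ × ℝ =>
        (pdx φ (z.1, z.2.1) + z.2.2 * pdy φ (z.1, z.2.1)) /
          (pdx χ (z.1, z.2.1) + z.2.2 * pdy χ (z.1, z.2.1)) := funext hq
    rw [hqeq]
    have h1 : DifferentiableAt ℝ (pdx φ) (x, y) := diff_pd hU hφ hxy (1, 0)
    have h2 : DifferentiableAt ℝ (pdy φ) (x, y) := diff_pd hU hφ hxy (0, 1)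
    have h3 : DifferentiableAt ℝ (pdx χ) (x, y) := diff_pd hU hχ hxy (1, 0)
    have h4 : DifferentiableAt ℝ (pdy χ) (x, y) := diff_pd hU hχ hxy (0, 1)
    have hN : DifferentiableAt ℝ
        (fun z : ℝ × ℝ × ℝ => pdx φ (z.1, z.2.1) + z.2.2 * pdy φ (z.1, z.2.1)) (x, y, p) :=
      (h1.comp (x, y, p) hπ).add (differentiableAt_snd.snd.mul (h2.comp (x, y, p) hπ))
    have hD : DifferentiableAt ℝ
        (fun z : ℝ × ℝ × ℝ => pdx χ (z.1, z.2.1) + z.2.2 * pdy χ (z.1, z.2.1)) (x, y, p) :=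
      (h3.comp (x, y, p) hπ).add (differentiableAt_snd.snd.mul (h4.comp (x, y, p) hπ))
    simp only [div_eq_mul_inv]
    exact hN.mul (hD.inv (by exact hA))
  have hPd : HasFDerivAt P
      (((fderiv ℝ χ (x, y)).comp πL).prod
        (((fderiv ℝ φ (x, y)).comp πL).prod (fderiv ℝ q (x, y, p)))) (x, y, p) := by
    have hPfun : P = fun z : ℝ × ℝ × ℝ => ((χ (z.1, z.2.1), φ (z.1, z.2.1), q z) : ℝ × ℝ × ℝ) :=
      funext hP
    rw [hPfun]
    exact HasFDerivAt.prodMk (hχd.hasFDerivAt.comp (x, y, p) πL.hasFDerivAt)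
      (HasFDerivAt.prodMk (hφd.hasFDerivAt.comp (x, y, p) πL.hasFDerivAt) hqd.hasFDerivAt)
  have e1 : (fderiv ℝ P (x, y, p)) (v1, v2, v3) =
      ((fderiv ℝ χ (x, y)) (v1, v2), (fderiv ℝ φ (x, y)) (v1, v2),
        (fderiv ℝ q (x, y, p)) (v1, v2, v3)) := by
    rw [hPd.fderiv]; rfl
  -- computation of q_p
  have hline : HasDerivAt (fun t : ℝ => ((x, y, t) : ℝ × ℝ × ℝ)) ((0, 0, 1) : ℝ × ℝ × ℝ) p :=
    HasDerivAt.prodMk (hasDerivAt_const p x) (HasDerivAt.prodMk (hasDerivAt_const p y) (hasDerivAt_id p))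
  have h1 : HasDerivAt (fun t : ℝ => q (x, y, t)) ((fderiv ℝ q (x, y, p)) (0, 0, 1)) p :=
    hqd.hasFDerivAt.comp_hasDerivAt p hline
  have hnum : HasDerivAt (fun t : ℝ => pdx φ (x, y) + t * pdy φ (x, y)) (pdy φ (x, y)) p := by
    simpa using ((hasDerivAt_id p).mul_const (pdy φ (x, y))).const_add (pdx φ (x, y))
  have hden : HasDerivAt (fun t : ℝ => pdx χ (x, y) + t * pdy χ (x, y)) (pdy χ (x, y)) p := by
    simpa using ((hasDerivAt_id p).mul_const (pdy χ (x, y))).const_add (pdx χ (x, y))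
  have hqconv : (fun t : ℝ => q (x, y, t)) =
      fun t : ℝ => (pdx φ (x, y) + t * pdy φ (x, y)) / (pdx χ (x, y) + t * pdy χ (x, y)) :=
    funext fun t => hq (x, y, t)
  have hqp : (fderiv ℝ q (x, y, p)) (0, 0, 1) =
      (pdy φ (x, y) * (pdx χ (x, y) + p * pdy χ (x, y)) -
        (pdx φ (x, y) + p * pdy φ (x, y)) * pdy χ (x, y)) /
        (pdx χ (x, y) + p * pdy χ (x, y)) ^ 2 :=
    h1.unique (by rw [hqconv]; exact hnum.div hden hA)
  have hqp2 : (fderiv ℝ q (x, y, p)) (0, 0, 1) =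
      1 / (pdx χ (x, y) + p * pdy χ (x, y)) ^ 2 := by
    rw [hqp]
    have h3 : pdy φ (x, y) * (pdx χ (x, y) + p * pdy χ (x, y)) -
        (pdx φ (x, y) + p * pdy φ (x, y)) * pdy χ (x, y) = 1 := by linear_combination hJ'
    rw [h3]
  have hqp3 : Dp3 q (x, y, p) = 1 / (pdx χ (x, y) + p * pdy χ (x, y)) ^ 2 := hqp2
  -- pointwise values
  have hqpt : q (x, y, p) = (pdx φ (x, y) + p * pdy φ (x, y)) /
      (pdx χ (x, y) + p * pdy χ (x, y)) := hq (x, y, p)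
  have ew1 : (fderiv ℝ χ (x, y)) (v1, v2) = v1 * pdx χ (x, y) + v2 * pdy χ (x, y) :=
    lin2 _ v1 v2
  have ew2 : (fderiv ℝ φ (x, y)) (v1, v2) = v1 * pdx φ (x, y) + v2 * pdy φ (x, y) :=
    lin2 _ v1 v2
  have ew3 : (fderiv ℝ q (x, y, p)) (v1, v2, v3) =
      v1 * Dx3 q (x, y, p) + v2 * Dy3 q (x, y, p) +
        v3 * (1 / (pdx χ (x, y) + p * pdy χ (x, y)) ^ 2) := by
    rw [lin3 _ v1 v2 v3, hqp2]
    rfl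
  refine ⟨?_, ?_, ?_⟩
  · simp only [e1, ew1, ew2, hqpt]
    field_simp
    ring_nf
    linear_combination (v2 - p * v1) * hJ'
  · simp only [e1, ew1, ew3, hqp3]
    field_simp
    ring
  · simp only [e1, ew1]
    rw [one_div_one_div]
    ring
end

section
/- Let U ⊆ ℝ² be open, χ, φ : U → ℝ be C² functions, and f : Ω → ℝ continuous, where Ω = {(x,y,p) : (x,y) ∈ U, χ_x + p χ_y ≠ 0}; let q(x,y,p) = (φ_x + p φ_y)/(χ_x + p χ_y) and 𝔇q = q_x + p q_y + f q_p. Let c : I → ℝ be twice differentiable on an open interval I with (x, c(x), c'(x)) ∈ Ω and c''(x) = f(x, c(x), c'(x)) for all x ∈ I. Set ξ(x) = χ(x,c(x)), η(x) = φ(x,c(x)). Then: (i) the function x ↦ η'(x)/ξ'(x) is differentiable with derivative (𝔇q)(x, c(x), c'(x)); (ii) consequently, if ȳ is a twice differentiable function on an interval containing ξ(I) with ȳ(ξ(x)) = η(x) for all x ∈ I, then ȳ''(ξ(x)) = (𝔇q)(x,c(x),c'(x))/(χ_x(x,c(x)) + c'(x) χ_y(x,c(x))) for all x ∈ I. In particular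 the transformed curve solves the second order ODE ȳ'' = f̄ where f̄ is characterized along the prolongation by f̄(χ, φ, q) = 𝔇q/(χ_x + p χ_y). -/
/-- Total derivative operator `𝔇 = ∂_x + p ∂_y + f ∂_p` associated with `f`. -/
noncomputable def Dtot (f g : ℝ × ℝ × ℝ → ℝ) (z : ℝ × ℝ × ℝ) : ℝ :=
  Dx3 g z + z.2.2 * Dy3 g z + f z * Dp3 g z

/-- Along a solution `c` of `y'' = f(x,y,y')`, (i) the slope `η'/ξ'` of the
transformed curve has derivative `𝔇q`, and (ii) the transformed curve solves the
second order ODE `ȳ'' = f̄` with `f̄ ∘ P = 𝔇q/(χ_x + p χ_y)`. -/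
theorem stmt4 (U : Set (ℝ × ℝ)) (hU : IsOpen U)
    (χ φ : ℝ × ℝ → ℝ) (hχ : ContDiffOn ℝ 2 χ U) (hφ : ContDiffOn ℝ 2 φ U)
    (f : ℝ × ℝ × ℝ → ℝ)
    (hf : ContinuousOn f
      {z : ℝ × ℝ × ℝ | (z.1, z.2.1) ∈ U ∧
        pdx χ (z.1, z.2.1) + z.2.2 * pdy χ (z.1, z.2.1) ≠ 0})
    (q : ℝ × ℝ × ℝ → ℝ)
    (hq : ∀ z : ℝ × ℝ × ℝ, q z =
      (pdx φ (z.1, z.2.1) + z.2.2 * pdy φ (z.1, z.2.1)) /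
        (pdx χ (z.1, z.2.1) + z.2.2 * pdy χ (z.1, z.2.1)))
    (I : Set ℝ) (hIopen : IsOpen I) (hIconn : I.OrdConnected)
    (c : ℝ → ℝ)
    (hc : ∀ x ∈ I, DifferentiableAt ℝ c x)
    (hc' : ∀ x ∈ I, DifferentiableAt ℝ (deriv c) x)
    (hmemU : ∀ x ∈ I, (x, c x) ∈ U)
    (hmemΩ : ∀ x ∈ I, pdx χ (x, c x) + deriv c x * pdy χ (x, c x) ≠ 0)
    (hode : ∀ x ∈ I, deriv (deriv c) x = f (x, c x, deriv c x))
    (ξ η : ℝ → ℝ)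
    (hξ : ∀ x : ℝ, ξ x = χ (x, c x)) (hη : ∀ x : ℝ, η x = φ (x, c x)) :
    -- (i) the slope function `x ↦ η'(x)/ξ'(x)` has derivative `(𝔇q)(x, c x, c' x)`
    (∀ x ∈ I, HasDerivAt (fun t => deriv η t / deriv ξ t)
      (Dtot f q (x, c x, deriv c x)) x) ∧
    -- (ii) the transformed curve solves `ȳ'' = f̄`
    (∀ J : Set ℝ, J.OrdConnected → ξ '' I ⊆ J →
      ∀ ybar : ℝ → ℝ,
        (∀ t ∈ J, DifferentiableAt ℝ ybar t) →
        (∀ t ∈ J, DifferentiableAt ℝ (deriv ybar) t) →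
        (∀ x ∈ I, ybar (ξ x) = η x) →
        ∀ x ∈ I, deriv (deriv ybar) (ξ x) =
          Dtot f q (x, c x, deriv c x) /
            (pdx χ (x, c x) + deriv c x * pdy χ (x, c x))) := by
  clear hf hIconn
  -- linearity of `fderiv` applied to special vectors
  have key2 : ∀ (g : ℝ × ℝ → ℝ) (z : ℝ × ℝ) (p : ℝ),
      fderiv ℝ g z (1, p) = pdx g z + p * pdy g z := by
    intro g z p
    have h : ((1 : ℝ), p) = ((1 : ℝ), (0 : ℝ)) + p • ((0 : ℝ), (1 : ℝ)) := by
      simp [Prod.ext_iff]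
    rw [h, map_add, map_smul, smul_eq_mul]
    rfl
  have key3 : ∀ (g : ℝ × ℝ × ℝ → ℝ) (z : ℝ × ℝ × ℝ) (p fv : ℝ),
      fderiv ℝ g z (1, p, fv) = Dx3 g z + p * Dy3 g z + fv * Dp3 g z := by
    intro g z p fv
    have h : ((1 : ℝ), p, fv) =
        ((1 : ℝ), (0 : ℝ), (0 : ℝ)) + p • ((0 : ℝ), (1 : ℝ), (0 : ℝ))
          + fv • ((0 : ℝ), (0 : ℝ), (1 : ℝ)) := by
      simp [Prod.ext_iff]
    rw [h, map_add, map_add, map_smul, map_smul, smul_eq_mul, smul_eq_mul]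
    rfl
  have hχdiff : ∀ t ∈ I, DifferentiableAt ℝ χ (t, c t) := fun t ht =>
    (hχ.contDiffAt (hU.mem_nhds (hmemU t ht))).differentiableAt two_ne_zero
  have hφdiff : ∀ t ∈ I, DifferentiableAt ℝ φ (t, c t) := fun t ht =>
    (hφ.contDiffAt (hU.mem_nhds (hmemU t ht))).differentiableAt two_ne_zero
  have hγ2 : ∀ t ∈ I, HasDerivAt (fun s => (s, c s)) ((1 : ℝ), deriv c t) t := fun t ht =>
    (hasDerivAt_id t).prodMk (hc t ht).hasDerivAt
  have hξ' : ∀ t ∈ I, HasDerivAt ξ (pdx χ (t, c t) + deriv c t * pdy χ (t, c t)) t := by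
    intro t ht
    have h := (hχdiff t ht).hasFDerivAt.comp_hasDerivAt t (hγ2 t ht)
    rw [key2] at h
    exact h.congr_of_eventuallyEq (Filter.Eventually.of_forall fun s => hξ s)
  have hη' : ∀ t ∈ I, HasDerivAt η (pdx φ (t, c t) + deriv c t * pdy φ (t, c t)) t := by
    intro t ht
    have h := (hφdiff t ht).hasFDerivAt.comp_hasDerivAt t (hγ2 t ht)
    rw [key2] at h
    exact h.congr_of_eventuallyEq (Filter.Eventually.of_forall fun s => hη s)
  have hslope_eq : ∀ t ∈ I, deriv η t / deriv ξ t = q (t, c t, deriv c t) := by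
    intro t ht
    rw [(hη' t ht).deriv, (hξ' t ht).deriv, hq]
  have hqd : ∀ t ∈ I, DifferentiableAt ℝ q (t, c t, deriv c t) := by
    intro t ht
    have hqfun : q = fun z : ℝ × ℝ × ℝ =>
        (pdx φ (z.1, z.2.1) + z.2.2 * pdy φ (z.1, z.2.1)) /
          (pdx χ (z.1, z.2.1) + z.2.2 * pdy χ (z.1, z.2.1)) := funext hq
    rw [hqfun]
    have hUmem := hU.mem_nhds (hmemU t ht)
    have hπ : DifferentiableAt ℝ (fun z : ℝ × ℝ × ℝ => (z.1, z.2.1))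
        (t, c t, deriv c t) := differentiableAt_fst.prodMk differentiableAt_snd.fst
    have hpd : ∀ g : ℝ × ℝ → ℝ, ContDiffOn ℝ 2 g U →
        DifferentiableAt ℝ (fun z : ℝ × ℝ × ℝ => pdx g (z.1, z.2.1)) (t, c t, deriv c t) ∧
        DifferentiableAt ℝ (fun z : ℝ × ℝ × ℝ => pdy g (z.1, z.2.1)) (t, c t, deriv c t) := by
      intro g hg
      have h1 : ContDiffAt ℝ 1 (fderiv ℝ g) (t, c t) :=
        (hg.contDiffAt hUmem).fderiv_right le_rfl
      have h2 : DifferentiableAt ℝ (fderiv ℝ g) (t, c t) := h1.differentiableAt one_ne_zero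
      constructor
      · exact DifferentiableAt.comp (t, c t, deriv c t)
          (h2.clm_apply (differentiableAt_const _)) hπ
      · exact DifferentiableAt.comp (t, c t, deriv c t)
          (h2.clm_apply (differentiableAt_const _)) hπ
    obtain ⟨hNx, hNy⟩ := hpd φ hφ
    obtain ⟨hDx, hDy⟩ := hpd χ hχ
    simp only [div_eq_mul_inv]
    exact (hNx.add (differentiableAt_snd.snd.mul hNy)).mul
      ((hDx.add (differentiableAt_snd.snd.mul hDy)).inv (hmemΩ t ht))
  have part1 : ∀ x ∈ I, HasDerivAt (fun t => deriv η t / deriv ξ t)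
      (Dtot f q (x, c x, deriv c x)) x := by
    intro x hx
    have hγ3 : HasDerivAt (fun s => (s, c s, deriv c s))
        ((1 : ℝ), deriv c x, deriv (deriv c) x) x :=
      (hasDerivAt_id x).prodMk ((hc x hx).hasDerivAt.prodMk (hc' x hx).hasDerivAt)
    have h := (hqd x hx).hasFDerivAt.comp_hasDerivAt x hγ3
    rw [key3, hode x hx] at h
    have heq2 : (fun t => deriv η t / deriv ξ t)
        =ᶠ[nhds x] (q ∘ fun s => (s, c s, deriv c s)) :=
      Filter.eventually_of_mem (hIopen.mem_nhds hx) fun t ht => hslope_eq t ht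
    exact h.congr_of_eventuallyEq heq2
  refine ⟨part1, ?_⟩
  intro J hJ hsub ybar hy1 hy2 heq x hx
  have step1 : ∀ t ∈ I, deriv ybar (ξ t) = deriv η t / deriv ξ t := by
    intro t ht
    have hξt : ξ t ∈ J := hsub ⟨t, ht, rfl⟩
    have hcomp : HasDerivAt (ybar ∘ ξ)
        (deriv ybar (ξ t) * (pdx χ (t, c t) + deriv c t * pdy χ (t, c t))) t :=
      (hy1 _ hξt).hasDerivAt.comp t (hξ' t ht)
    have hη2 : HasDerivAt η
        (deriv ybar (ξ t) * (pdx χ (t, c t) + deriv c t * pdy χ (t, c t))) t :=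
      hcomp.congr_of_eventuallyEq
        (Filter.eventually_of_mem (hIopen.mem_nhds ht) fun s hs => (heq s hs).symm)
    have huniq := hη2.unique (hη' t ht)
    rw [(hη' t ht).deriv, (hξ' t ht).deriv, eq_div_iff (hmemΩ t ht)]
    exact huniq
  have hξx : ξ x ∈ J := hsub ⟨x, hx, rfl⟩
  have hcomp2 : HasDerivAt (deriv ybar ∘ ξ)
      (deriv (deriv ybar) (ξ x) * (pdx χ (x, c x) + deriv c x * pdy χ (x, c x))) x :=
    (hy2 _ hξx).hasDerivAt.comp x (hξ' x hx)
  have hsl : HasDerivAt (deriv ybar ∘ ξ) (Dtot f q (x, c x, deriv c x)) x :=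
    (part1 x hx).congr_of_eventuallyEq
      (Filter.eventually_of_mem (hIopen.mem_nhds hx) fun t ht => step1 t ht)
  have huniq := hcomp2.unique hsl
  rw [eq_div_iff (hmemΩ x hx)]
  exact huniq
end

section
/- Let U ⊆ ℝ² be open, A, B, C, D : U → ℝ be C¹ functions, and define f : U × ℝ → ℝ by f(x,y,p) = A(x,y)p³ + 3B(x,y)p² + 3C(x,y)p + D(x,y). Then for every (x,y,p) ∈ U × ℝ: (1/18)·((f_{pp})² − 2·f_p·f_{ppp}) + (1/6)·(f_{ppy} − 𝔇(f_{ppp})) = −(A_x − B_y + 2(AC − B²)), where the right-hand side is evaluated at (x,y); in particular the left-hand side is independent of p. -/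



noncomputable def piL : (ℝ × ℝ × ℝ) →L[ℝ] (ℝ × ℝ) :=
  (ContinuousLinearMap.fst ℝ ℝ (ℝ × ℝ)).prod
    ((ContinuousLinearMap.fst ℝ ℝ ℝ).comp (ContinuousLinearMap.snd ℝ ℝ (ℝ × ℝ)))

noncomputable def p3L : (ℝ × ℝ × ℝ) →L[ℝ] ℝ :=
  (ContinuousLinearMap.snd ℝ ℝ ℝ).comp (ContinuousLinearMap.snd ℝ ℝ (ℝ × ℝ))

lemma cubic_fderiv_apply (a b c d : ℝ × ℝ → ℝ) (z : ℝ × ℝ × ℝ)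
    (ha : DifferentiableAt ℝ a (z.1, z.2.1)) (hb : DifferentiableAt ℝ b (z.1, z.2.1))
    (hc : DifferentiableAt ℝ c (z.1, z.2.1)) (hd : DifferentiableAt ℝ d (z.1, z.2.1))
    (v : ℝ × ℝ × ℝ) :
    fderiv ℝ (fun w : ℝ × ℝ × ℝ => a (w.1, w.2.1) * w.2.2 ^ 3
      + 3 * b (w.1, w.2.1) * w.2.2 ^ 2 + 3 * c (w.1, w.2.1) * w.2.2 + d (w.1, w.2.1)) z v
    = fderiv ℝ a (z.1, z.2.1) (v.1, v.2.1) * z.2.2 ^ 3 + a (z.1, z.2.1) * (3 * z.2.2 ^ 2 * v.2.2)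
      + 3 * (fderiv ℝ b (z.1, z.2.1) (v.1, v.2.1) * z.2.2 ^ 2 + b (z.1, z.2.1) * (2 * z.2.2 * v.2.2))
      + 3 * (fderiv ℝ c (z.1, z.2.1) (v.1, v.2.1) * z.2.2 + c (z.1, z.2.1) * v.2.2)
      + fderiv ℝ d (z.1, z.2.1) (v.1, v.2.1) := by
  have hπ : HasFDerivAt (fun w : ℝ × ℝ × ℝ => (w.1, w.2.1)) piL z := piL.hasFDerivAt
  have hp : HasFDerivAt (fun w : ℝ × ℝ × ℝ => w.2.2) p3L z := p3L.hasFDerivAt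
  have hA : HasFDerivAt (fun w : ℝ × ℝ × ℝ => a (w.1, w.2.1)) ((fderiv ℝ a (z.1, z.2.1)).comp piL) z := ha.hasFDerivAt.comp z hπ
  have hB : HasFDerivAt (fun w : ℝ × ℝ × ℝ => b (w.1, w.2.1)) ((fderiv ℝ b (z.1, z.2.1)).comp piL) z := hb.hasFDerivAt.comp z hπ
  have hC : HasFDerivAt (fun w : ℝ × ℝ × ℝ => c (w.1, w.2.1)) ((fderiv ℝ c (z.1, z.2.1)).comp piL) z := hc.hasFDerivAt.comp z hπ
  have hD : HasFDerivAt (fun w : ℝ × ℝ × ℝ => d (w.1, w.2.1)) ((fderiv ℝ d (z.1, z.2.1)).comp piL) z := hd.hasFDerivAt.comp z hπ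
  have h3 : HasFDerivAt (fun w : ℝ × ℝ × ℝ => w.2.2 ^ 3) ((3 * z.2.2 ^ 2) • p3L) z := by
    have := (hasDerivAt_pow 3 z.2.2).comp_hasFDerivAt z hp
    simpa [Function.comp_def] using this
  have h2 : HasFDerivAt (fun w : ℝ × ℝ × ℝ => w.2.2 ^ 2) ((2 * z.2.2) • p3L) z := by
    have := (hasDerivAt_pow 2 z.2.2).comp_hasFDerivAt z hp
    simpa [Function.comp_def] using this
  have H := ((((hA.mul h3).add ((hB.const_mul 3).mul h2)).add ((hC.const_mul 3).mul hp)).add hD)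
  have := (show HasFDerivAt (fun w : ℝ × ℝ × ℝ => a (w.1, w.2.1) * w.2.2 ^ 3 + 3 * b (w.1, w.2.1) * w.2.2 ^ 2 + 3 * c (w.1, w.2.1) * w.2.2 + d (w.1, w.2.1)) _ z from H).fderiv
  rw [this]
  simp [piL, p3L, ContinuousLinearMap.add_apply, ContinuousLinearMap.smul_apply,
    ContinuousLinearMap.comp_apply, ContinuousLinearMap.prod_apply]
  ring

lemma fderiv_cmul (c : ℝ) (g : ℝ × ℝ → ℝ) (q : ℝ × ℝ) (hg : DifferentiableAt ℝ g q) (v : ℝ × ℝ) :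
    fderiv ℝ (fun q => c * g q) q v = c * fderiv ℝ g q v := by
  rw [fderiv_const_mul hg]; rfl

/-- For a cubic-in-`p` right-hand side, the curvature coefficient
`(1/18)(f_{pp}² − 2 f_p f_{ppp}) + (1/6)(f_{ppy} − 𝔇(f_{ppp}))` equals
`−(A_x − B_y + 2(AC − B²))`; in particular it is independent of `p`. -/
theorem stmt7 (U : Set (ℝ × ℝ)) (hU : IsOpen U)
    (A B C D : ℝ × ℝ → ℝ)
    (hA : ContDiffOn ℝ 1 A U) (hB : ContDiffOn ℝ 1 B U)
    (hC : ContDiffOn ℝ 1 C U) (hD : ContDiffOn ℝ 1 D U)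
    (f : ℝ × ℝ × ℝ → ℝ)
    (hf : ∀ x y p : ℝ, f (x, y, p) =
      A (x, y) * p ^ 3 + 3 * B (x, y) * p ^ 2 + 3 * C (x, y) * p + D (x, y)) :
    ∀ x y p : ℝ, (x, y) ∈ U →
      (1 / 18) * ((Dp3 (Dp3 f) (x, y, p)) ^ 2
            - 2 * Dp3 f (x, y, p) * Dp3 (Dp3 (Dp3 f)) (x, y, p))
          + (1 / 6) * (Dy3 (Dp3 (Dp3 f)) (x, y, p)
            - Dtot f (Dp3 (Dp3 (Dp3 f))) (x, y, p)) =
        -(pdx A (x, y) - pdy B (x, y)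
            + 2 * (A (x, y) * C (x, y) - B (x, y) ^ 2)) := by
  intro x y p hxy
  have hAd : ∀ q ∈ U, DifferentiableAt ℝ A q := fun q hq =>
    (hA.differentiableOn one_ne_zero).differentiableAt (hU.mem_nhds hq)
  have hBd : ∀ q ∈ U, DifferentiableAt ℝ B q := fun q hq =>
    (hB.differentiableOn one_ne_zero).differentiableAt (hU.mem_nhds hq)
  have hCd : ∀ q ∈ U, DifferentiableAt ℝ C q := fun q hq =>
    (hC.differentiableOn one_ne_zero).differentiableAt (hU.mem_nhds hq)
  have hDd : ∀ q ∈ U, DifferentiableAt ℝ D q := fun q hq =>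
    (hD.differentiableOn one_ne_zero).differentiableAt (hU.mem_nhds hq)
  have hfeq : f = fun w : ℝ × ℝ × ℝ => A (w.1, w.2.1) * w.2.2 ^ 3
      + 3 * B (w.1, w.2.1) * w.2.2 ^ 2 + 3 * C (w.1, w.2.1) * w.2.2 + D (w.1, w.2.1) := by
    funext w
    obtain ⟨a, b, c⟩ := w
    exact hf a b c
  set V : Set (ℝ × ℝ × ℝ) := {w | (w.1, w.2.1) ∈ U} with hVdef
  have hV : IsOpen V := hU.preimage (continuous_fst.prodMk (continuous_fst.comp continuous_snd))
  have hz0V : ((x, y, p) : ℝ × ℝ × ℝ) ∈ V := hxy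
  have hmemU : ∀ w ∈ V, (w.1, w.2.1) ∈ U := fun w hw => hw
  -- first p-derivative
  have h1 : ∀ w ∈ V, Dp3 f w = (fun w : ℝ × ℝ × ℝ => (fun _ : ℝ × ℝ => (0:ℝ)) (w.1, w.2.1) * w.2.2 ^ 3
      + 3 * A (w.1, w.2.1) * w.2.2 ^ 2 + 3 * (fun q => 2 * B q) (w.1, w.2.1) * w.2.2
      + (fun q => 3 * C q) (w.1, w.2.1)) w := by
    intro w hw
    rw [Dp3, hfeq, cubic_fderiv_apply A B C D w (hAd _ (hmemU w hw)) (hBd _ (hmemU w hw))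
      (hCd _ (hmemU w hw)) (hDd _ (hmemU w hw))]
    have h0 : ((0:ℝ), (0:ℝ)) = (0 : ℝ × ℝ) := rfl
    simp only [h0, map_zero]
    ring
  -- G1 with coefficients (0, A, 2B, 3C)
  have e1 : ∀ w ∈ V, Dp3 f =ᶠ[nhds w] (fun w : ℝ × ℝ × ℝ => (fun _ : ℝ × ℝ => (0:ℝ)) (w.1, w.2.1) * w.2.2 ^ 3
      + 3 * A (w.1, w.2.1) * w.2.2 ^ 2 + 3 * (fun q => 2 * B q) (w.1, w.2.1) * w.2.2
      + (fun q => 3 * C q) (w.1, w.2.1)) := by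
    intro w hw
    filter_upwards [hV.mem_nhds hw] with w' hw' using h1 w' hw'
  -- second p-derivative
  have h2 : ∀ w ∈ V, Dp3 (Dp3 f) w = (fun w : ℝ × ℝ × ℝ => (fun _ : ℝ × ℝ => (0:ℝ)) (w.1, w.2.1) * w.2.2 ^ 3
      + 3 * (fun _ : ℝ × ℝ => (0:ℝ)) (w.1, w.2.1) * w.2.2 ^ 2 + 3 * (fun q => 2 * A q) (w.1, w.2.1) * w.2.2
      + (fun q => 6 * B q) (w.1, w.2.1)) w := by
    intro w hw
    rw [Dp3, (e1 w hw).fderiv_eq, cubic_fderiv_apply _ A _ _ w (differentiableAt_const 0)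
      (hAd _ (hmemU w hw)) ((hBd _ (hmemU w hw)).const_mul 2) ((hCd _ (hmemU w hw)).const_mul 3)]
    have h0 : ((0:ℝ), (0:ℝ)) = (0 : ℝ × ℝ) := rfl
    simp only [h0, map_zero]
    ring
  have e2 : ∀ w ∈ V, Dp3 (Dp3 f) =ᶠ[nhds w] (fun w : ℝ × ℝ × ℝ => (fun _ : ℝ × ℝ => (0:ℝ)) (w.1, w.2.1) * w.2.2 ^ 3
      + 3 * (fun _ : ℝ × ℝ => (0:ℝ)) (w.1, w.2.1) * w.2.2 ^ 2 + 3 * (fun q => 2 * A q) (w.1, w.2.1) * w.2.2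
      + (fun q => 6 * B q) (w.1, w.2.1)) := by
    intro w hw
    filter_upwards [hV.mem_nhds hw] with w' hw' using h2 w' hw'
  -- third p-derivative
  have h3 : ∀ w ∈ V, Dp3 (Dp3 (Dp3 f)) w = (fun w : ℝ × ℝ × ℝ => (fun _ : ℝ × ℝ => (0:ℝ)) (w.1, w.2.1) * w.2.2 ^ 3
      + 3 * (fun _ : ℝ × ℝ => (0:ℝ)) (w.1, w.2.1) * w.2.2 ^ 2 + 3 * (fun _ : ℝ × ℝ => (0:ℝ)) (w.1, w.2.1) * w.2.2
      + (fun q => 6 * A q) (w.1, w.2.1)) w := by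
    intro w hw
    rw [Dp3, (e2 w hw).fderiv_eq, cubic_fderiv_apply _ _ _ _ w (differentiableAt_const 0)
      (differentiableAt_const 0) ((hAd _ (hmemU w hw)).const_mul 2) ((hBd _ (hmemU w hw)).const_mul 6)]
    have h0 : ((0:ℝ), (0:ℝ)) = (0 : ℝ × ℝ) := rfl
    simp only [h0, map_zero]
    ring
  have e3 : ∀ w ∈ V, Dp3 (Dp3 (Dp3 f)) =ᶠ[nhds w] (fun w : ℝ × ℝ × ℝ => (fun _ : ℝ × ℝ => (0:ℝ)) (w.1, w.2.1) * w.2.2 ^ 3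
      + 3 * (fun _ : ℝ × ℝ => (0:ℝ)) (w.1, w.2.1) * w.2.2 ^ 2 + 3 * (fun _ : ℝ × ℝ => (0:ℝ)) (w.1, w.2.1) * w.2.2
      + (fun q => 6 * A q) (w.1, w.2.1)) := by
    intro w hw
    filter_upwards [hV.mem_nhds hw] with w' hw' using h3 w' hw'
  -- value extractions at z0
  have v1 : Dp3 f (x, y, p) = 3 * A (x, y) * p ^ 2 + 6 * B (x, y) * p + 3 * C (x, y) := by
    have := h1 _ hz0V; simp only at this; rw [this]; ring
  have v2 : Dp3 (Dp3 f) (x, y, p) = 6 * A (x, y) * p + 6 * B (x, y) := by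
    have := h2 _ hz0V; simp only at this; rw [this]; ring
  have v3 : Dp3 (Dp3 (Dp3 f)) (x, y, p) = 6 * A (x, y) := by
    have := h3 _ hz0V; simp only at this; rw [this]; ring
  -- Dy3 of second derivative
  have v4 : Dy3 (Dp3 (Dp3 f)) (x, y, p) = 6 * pdy A (x, y) * p + 6 * pdy B (x, y) := by
    rw [Dy3, (e2 _ hz0V).fderiv_eq, cubic_fderiv_apply _ _ _ _ (x, y, p) (differentiableAt_const 0)
      (differentiableAt_const 0) ((hAd _ hxy).const_mul 2) ((hBd _ hxy).const_mul 6)]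
    simp only [fderiv_const, fderiv_fun_const, Pi.zero_apply, ContinuousLinearMap.zero_apply]
    rw [fderiv_cmul 2 A _ (hAd _ hxy), fderiv_cmul 6 B _ (hBd _ hxy)]
    simp only [pdy]
    ring
  -- derivatives of third derivative
  have v5 : Dx3 (Dp3 (Dp3 (Dp3 f))) (x, y, p) = 6 * pdx A (x, y) := by
    rw [Dx3, (e3 _ hz0V).fderiv_eq, cubic_fderiv_apply _ _ _ _ (x, y, p) (differentiableAt_const 0)
      (differentiableAt_const 0) (differentiableAt_const 0) ((hAd _ hxy).const_mul 6)]
    simp only [fderiv_const, fderiv_fun_const, Pi.zero_apply, ContinuousLinearMap.zero_apply]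
    rw [fderiv_cmul 6 A _ (hAd _ hxy)]
    simp only [pdx]
    ring
  have v6 : Dy3 (Dp3 (Dp3 (Dp3 f))) (x, y, p) = 6 * pdy A (x, y) := by
    rw [Dy3, (e3 _ hz0V).fderiv_eq, cubic_fderiv_apply _ _ _ _ (x, y, p) (differentiableAt_const 0)
      (differentiableAt_const 0) (differentiableAt_const 0) ((hAd _ hxy).const_mul 6)]
    simp only [fderiv_const, fderiv_fun_const, Pi.zero_apply, ContinuousLinearMap.zero_apply]
    rw [fderiv_cmul 6 A _ (hAd _ hxy)]
    simp only [pdy]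
    ring
  have v7 : Dp3 (Dp3 (Dp3 (Dp3 f))) (x, y, p) = 0 := by
    rw [Dp3, (e3 _ hz0V).fderiv_eq, cubic_fderiv_apply _ _ _ _ (x, y, p) (differentiableAt_const 0)
      (differentiableAt_const 0) (differentiableAt_const 0) ((hAd _ hxy).const_mul 6)]
    have h0 : ((0:ℝ), (0:ℝ)) = (0 : ℝ × ℝ) := rfl
    simp only [fderiv_const, fderiv_fun_const, Pi.zero_apply, ContinuousLinearMap.zero_apply, h0, map_zero]
    ring
  rw [Dtot]
  simp only at v5 v6 v7 ⊢
  rw [v1, v2, v3, v4, v5, v6, v7]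
  ring
end

section
/- Let U ⊆ ℝ² be open and f : U × ℝ → ℝ a C^∞ function. Then the following conditions hold identically on U × ℝ: (i) ∂⁴f/∂p⁴ = 0; (ii) 2·f_{py} + (1/3)·f_p·f_{pp} − 𝔇(f_{pp}) = 0; (iii) f_y + (2/9)·(f_p)² − (1/3)·𝔇(f_p) = 0; (iv) (1/18)·((f_{pp})² − 2·f_p·f_{ppp}) + (1/6)·(f_{ppy} − 𝔇(f_{ppp})) = 0; if and only if there exist C^∞ functions A, B, C, D : U → ℝ such that f(x,y,p) = A(x,y)p³ + 3B(x,y)p² + 3C(x,y)p + D(x,y) on U × ℝ and the system of partial differential equations D_y − C_x = 2(BD − C²), C_y − B_x = AD − BC, B_y − A_x = 2(AC − B²) holds on U. -/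
open scoped ContDiff

noncomputable def cub (a b c d : ℝ × ℝ → ℝ) (z : ℝ × ℝ × ℝ) : ℝ :=
  a (z.1, z.2.1) * z.2.2 ^ 3 + b (z.1, z.2.1) * z.2.2 ^ 2 + c (z.1, z.2.1) * z.2.2 + d (z.1, z.2.1)

lemma cub_fderiv_apply (a b c d : ℝ × ℝ → ℝ) (z : ℝ × ℝ × ℝ)
    (ha : DifferentiableAt ℝ a (z.1, z.2.1)) (hb : DifferentiableAt ℝ b (z.1, z.2.1))
    (hc : DifferentiableAt ℝ c (z.1, z.2.1)) (hd : DifferentiableAt ℝ d (z.1, z.2.1))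
    (v : ℝ × ℝ × ℝ) :
    fderiv ℝ (cub a b c d) z v =
      fderiv ℝ a (z.1, z.2.1) (v.1, v.2.1) * z.2.2 ^ 3 + a (z.1, z.2.1) * (3 * z.2.2 ^ 2 * v.2.2)
      + fderiv ℝ b (z.1, z.2.1) (v.1, v.2.1) * z.2.2 ^ 2 + b (z.1, z.2.1) * (2 * z.2.2 * v.2.2)
      + fderiv ℝ c (z.1, z.2.1) (v.1, v.2.1) * z.2.2 + c (z.1, z.2.1) * v.2.2
      + fderiv ℝ d (z.1, z.2.1) (v.1, v.2.1) := by
  set π : (ℝ × ℝ × ℝ) →L[ℝ] ℝ × ℝ :=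
    (ContinuousLinearMap.fst ℝ ℝ (ℝ × ℝ)).prod
      ((ContinuousLinearMap.fst ℝ ℝ ℝ).comp (ContinuousLinearMap.snd ℝ ℝ (ℝ × ℝ))) with hπdef
  set q : (ℝ × ℝ × ℝ) →L[ℝ] ℝ :=
    (ContinuousLinearMap.snd ℝ ℝ ℝ).comp (ContinuousLinearMap.snd ℝ ℝ (ℝ × ℝ)) with hqdef
  have hπ : HasFDerivAt (fun w : ℝ × ℝ × ℝ => (w.1, w.2.1)) π z := π.hasFDerivAt
  have hq : HasFDerivAt (fun w : ℝ × ℝ × ℝ => w.2.2) q z := q.hasFDerivAt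
  have ha' : HasFDerivAt (fun w : ℝ × ℝ × ℝ => a (w.1, w.2.1))
      ((fderiv ℝ a (z.1, z.2.1)).comp π) z := ha.hasFDerivAt.comp z hπ
  have hb' : HasFDerivAt (fun w : ℝ × ℝ × ℝ => b (w.1, w.2.1))
      ((fderiv ℝ b (z.1, z.2.1)).comp π) z := hb.hasFDerivAt.comp z hπ
  have hc' : HasFDerivAt (fun w : ℝ × ℝ × ℝ => c (w.1, w.2.1))
      ((fderiv ℝ c (z.1, z.2.1)).comp π) z := hc.hasFDerivAt.comp z hπ
  have hd' : HasFDerivAt (fun w : ℝ × ℝ × ℝ => d (w.1, w.2.1))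
      ((fderiv ℝ d (z.1, z.2.1)).comp π) z := hd.hasFDerivAt.comp z hπ
  have hp3 : HasFDerivAt (fun w : ℝ × ℝ × ℝ => w.2.2 ^ 3) (((3 : ℝ) * z.2.2 ^ 2) • q) z := by
    have := (hasDerivAt_pow 3 z.2.2).comp_hasFDerivAt z hq
    simpa [Function.comp_def] using this
  have hp2 : HasFDerivAt (fun w : ℝ × ℝ × ℝ => w.2.2 ^ 2) (((2 : ℝ) * z.2.2) • q) z := by
    have := (hasDerivAt_pow 2 z.2.2).comp_hasFDerivAt z hq
    simpa [Function.comp_def] using this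
  have H : HasFDerivAt (cub a b c d) _ z :=
    (((ha'.mul hp3).add (hb'.mul hp2)).add (hc'.mul hq)).add hd'
  rw [H.fderiv]
  simp [ContinuousLinearMap.add_apply, ContinuousLinearMap.smul_apply,
    ContinuousLinearMap.comp_apply, ContinuousLinearMap.coe_fst', ContinuousLinearMap.coe_snd',
    smul_eq_mul, hπdef, hqdef]
  ring

lemma pd_cmul (g : ℝ×ℝ→ℝ) {w : ℝ×ℝ} (hg : DifferentiableAt ℝ g w) (c : ℝ) (v : ℝ×ℝ) :
    fderiv ℝ (fun x => c * g x) w v = c * fderiv ℝ g w v := by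
  rw [fderiv_const_mul hg]; simp

/-- All the directional-derivative formulas needed, bundled. -/
lemma formulas (U : Set (ℝ × ℝ)) (hU : IsOpen U) (A B C D : ℝ × ℝ → ℝ)
    (hA : ∀ w ∈ U, DifferentiableAt ℝ A w) (hB : ∀ w ∈ U, DifferentiableAt ℝ B w)
    (hC : ∀ w ∈ U, DifferentiableAt ℝ C w) (hD : ∀ w ∈ U, DifferentiableAt ℝ D w)
    (f : ℝ × ℝ × ℝ → ℝ)
    (hfe : ∀ z : ℝ × ℝ × ℝ, (z.1, z.2.1) ∈ U → f z =
      A (z.1, z.2.1) * z.2.2 ^ 3 + 3 * B (z.1, z.2.1) * z.2.2 ^ 2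
        + 3 * C (z.1, z.2.1) * z.2.2 + D (z.1, z.2.1)) :
    ∀ z : ℝ × ℝ × ℝ, (z.1, z.2.1) ∈ U →
      (Dp3 f z = 3 * A (z.1,z.2.1) * z.2.2 ^ 2 + 6 * B (z.1,z.2.1) * z.2.2 + 3 * C (z.1,z.2.1)) ∧
      (Dp3 (Dp3 f) z = 6 * A (z.1,z.2.1) * z.2.2 + 6 * B (z.1,z.2.1)) ∧
      (Dp3 (Dp3 (Dp3 f)) z = 6 * A (z.1,z.2.1)) ∧
      (Dp3 (Dp3 (Dp3 (Dp3 f))) z = 0) ∧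
      (Dy3 f z = pdy A (z.1,z.2.1) * z.2.2 ^ 3 + 3 * pdy B (z.1,z.2.1) * z.2.2 ^ 2
        + 3 * pdy C (z.1,z.2.1) * z.2.2 + pdy D (z.1,z.2.1)) ∧
      (Dx3 (Dp3 f) z = 3 * pdx A (z.1,z.2.1) * z.2.2 ^ 2 + 6 * pdx B (z.1,z.2.1) * z.2.2
        + 3 * pdx C (z.1,z.2.1)) ∧
      (Dy3 (Dp3 f) z = 3 * pdy A (z.1,z.2.1) * z.2.2 ^ 2 + 6 * pdy B (z.1,z.2.1) * z.2.2
        + 3 * pdy C (z.1,z.2.1)) ∧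
      (Dx3 (Dp3 (Dp3 f)) z = 6 * pdx A (z.1,z.2.1) * z.2.2 + 6 * pdx B (z.1,z.2.1)) ∧
      (Dy3 (Dp3 (Dp3 f)) z = 6 * pdy A (z.1,z.2.1) * z.2.2 + 6 * pdy B (z.1,z.2.1)) ∧
      (Dx3 (Dp3 (Dp3 (Dp3 f))) z = 6 * pdx A (z.1,z.2.1)) ∧
      (Dy3 (Dp3 (Dp3 (Dp3 f))) z = 6 * pdy A (z.1,z.2.1)) := by
  have hScont : Continuous (fun z : ℝ × ℝ × ℝ => (z.1, z.2.1)) := by fun_prop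
  have hS : IsOpen {z : ℝ × ℝ × ℝ | (z.1, z.2.1) ∈ U} := hU.preimage hScont
  have fder_congr : ∀ {g h : ℝ × ℝ × ℝ → ℝ},
      (∀ z ∈ {z : ℝ × ℝ × ℝ | (z.1, z.2.1) ∈ U}, g z = h z) →
      ∀ {z : ℝ × ℝ × ℝ}, z ∈ {z : ℝ × ℝ × ℝ | (z.1, z.2.1) ∈ U} →
      fderiv ℝ g z = fderiv ℝ h z := by
    intro g h hgh z hz
    exact (Filter.eventuallyEq_of_mem (hS.mem_nhds hz) hgh).fderiv_eq
  have h0 : ((0:ℝ), (0:ℝ)) = (0 : ℝ × ℝ) := rfl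
  -- coefficient differentiability helpers
  have dA3 : ∀ w ∈ U, DifferentiableAt ℝ (fun w => 3 * A w) w := fun w hw => (hA w hw).const_mul 3
  have dA6 : ∀ w ∈ U, DifferentiableAt ℝ (fun w => 6 * A w) w := fun w hw => (hA w hw).const_mul 6
  have dB3 : ∀ w ∈ U, DifferentiableAt ℝ (fun w => 3 * B w) w := fun w hw => (hB w hw).const_mul 3
  have dB6 : ∀ w ∈ U, DifferentiableAt ℝ (fun w => 6 * B w) w := fun w hw => (hB w hw).const_mul 6
  have dC3 : ∀ w ∈ U, DifferentiableAt ℝ (fun w => 3 * C w) w := fun w hw => (hC w hw).const_mul 3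
  have dZ : ∀ w ∈ U, DifferentiableAt ℝ (fun _ : ℝ×ℝ => (0:ℝ)) w := fun w _ => differentiableAt_const 0
  -- level 0
  have he0 : ∀ z ∈ {z : ℝ × ℝ × ℝ | (z.1, z.2.1) ∈ U},
      f z = cub A (fun w => 3 * B w) (fun w => 3 * C w) D z := by
    intro z hz; rw [hfe z hz]; simp [cub]
  -- level 1 : Dp3 f
  have he1 : ∀ z ∈ {z : ℝ × ℝ × ℝ | (z.1, z.2.1) ∈ U},
      Dp3 f z = cub (fun _ => 0) (fun w => 3 * A w) (fun w => 6 * B w) (fun w => 3 * C w) z := by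
    intro z hz
    rw [Dp3, fder_congr he0 hz,
      cub_fderiv_apply _ _ _ _ _ (hA _ hz) (dB3 _ hz) (dC3 _ hz) (hD _ hz)]
    simp [h0, cub]; try ring
  -- level 2 : Dp3 (Dp3 f)
  have he2 : ∀ z ∈ {z : ℝ × ℝ × ℝ | (z.1, z.2.1) ∈ U},
      Dp3 (Dp3 f) z = cub (fun _ => 0) (fun _ => 0) (fun w => 6 * A w) (fun w => 6 * B w) z := by
    intro z hz
    rw [Dp3, fder_congr he1 hz,
      cub_fderiv_apply _ _ _ _ _ (dZ _ hz) (dA3 _ hz) (dB6 _ hz) (dC3 _ hz)]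
    simp [h0, cub]; try ring
  -- level 3
  have he3 : ∀ z ∈ {z : ℝ × ℝ × ℝ | (z.1, z.2.1) ∈ U},
      Dp3 (Dp3 (Dp3 f)) z = cub (fun _ => 0) (fun _ => 0) (fun _ => 0) (fun w => 6 * A w) z := by
    intro z hz
    rw [Dp3, fder_congr he2 hz,
      cub_fderiv_apply _ _ _ _ _ (dZ _ hz) (dZ _ hz) (dA6 _ hz) (dB6 _ hz)]
    simp [h0, cub]; try ring
  -- level 4
  have he4 : ∀ z ∈ {z : ℝ × ℝ × ℝ | (z.1, z.2.1) ∈ U}, Dp3 (Dp3 (Dp3 (Dp3 f))) z = 0 := by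
    intro z hz
    rw [Dp3, fder_congr he3 hz,
      cub_fderiv_apply _ _ _ _ _ (dZ _ hz) (dZ _ hz) (dZ _ hz) (dA6 _ hz)]
    simp [h0, cub]
  intro z hz
  refine ⟨by rw [he1 z hz]; simp [cub]; try ring, by rw [he2 z hz]; simp [cub]; try ring,
    by rw [he3 z hz]; simp [cub]; try ring, he4 z hz, ?_, ?_, ?_, ?_, ?_, ?_, ?_⟩
  · rw [Dy3, fder_congr he0 hz,
      cub_fderiv_apply _ _ _ _ _ (hA _ hz) (dB3 _ hz) (dC3 _ hz) (hD _ hz)]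
    simp [pdy, pd_cmul B (hB _ hz), pd_cmul C (hC _ hz)]; try ring
  · rw [Dx3, fder_congr he1 hz,
      cub_fderiv_apply _ _ _ _ _ (dZ _ hz) (dA3 _ hz) (dB6 _ hz) (dC3 _ hz)]
    simp [pdx, pd_cmul A (hA _ hz), pd_cmul B (hB _ hz), pd_cmul C (hC _ hz)]; try ring
  · rw [Dy3, fder_congr he1 hz,
      cub_fderiv_apply _ _ _ _ _ (dZ _ hz) (dA3 _ hz) (dB6 _ hz) (dC3 _ hz)]
    simp [pdy, pd_cmul A (hA _ hz), pd_cmul B (hB _ hz), pd_cmul C (hC _ hz)]; try ring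
  · rw [Dx3, fder_congr he2 hz,
      cub_fderiv_apply _ _ _ _ _ (dZ _ hz) (dZ _ hz) (dA6 _ hz) (dB6 _ hz)]
    simp [pdx, pd_cmul A (hA _ hz), pd_cmul B (hB _ hz)]; try ring
  · rw [Dy3, fder_congr he2 hz,
      cub_fderiv_apply _ _ _ _ _ (dZ _ hz) (dZ _ hz) (dA6 _ hz) (dB6 _ hz)]
    simp [pdy, pd_cmul A (hA _ hz), pd_cmul B (hB _ hz)]; try ring
  · rw [Dx3, fder_congr he3 hz,
      cub_fderiv_apply _ _ _ _ _ (dZ _ hz) (dZ _ hz) (dZ _ hz) (dA6 _ hz)]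
    simp [pdx, pd_cmul A (hA _ hz)]
  · rw [Dy3, fder_congr he3 hz,
      cub_fderiv_apply _ _ _ _ _ (dZ _ hz) (dZ _ hz) (dZ _ hz) (dA6 _ hz)]
    simp [pdy, pd_cmul A (hA _ hz)]


/-- All differential invariants of the area-preserving equivalence problem of
`y'' = f` vanish identically if and only if `f` is a cubic polynomial in `p` whose
coefficients satisfy the stated system of PDEs. -/
theorem stmt9 (U : Set (ℝ × ℝ)) (hU : IsOpen U)
    (f : ℝ × ℝ × ℝ → ℝ)
    (hf : ContDiffOn ℝ ∞ f {z : ℝ × ℝ × ℝ | (z.1, z.2.1) ∈ U}) :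
    ((∀ z : ℝ × ℝ × ℝ, (z.1, z.2.1) ∈ U →
        Dp3 (Dp3 (Dp3 (Dp3 f))) z = 0) ∧
      (∀ z : ℝ × ℝ × ℝ, (z.1, z.2.1) ∈ U →
        2 * Dy3 (Dp3 f) z + (1 / 3) * Dp3 f z * Dp3 (Dp3 f) z
          - Dtot f (Dp3 (Dp3 f)) z = 0) ∧
      (∀ z : ℝ × ℝ × ℝ, (z.1, z.2.1) ∈ U →
        Dy3 f z + (2 / 9) * (Dp3 f z) ^ 2 - (1 / 3) * Dtot f (Dp3 f) z = 0) ∧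
      (∀ z : ℝ × ℝ × ℝ, (z.1, z.2.1) ∈ U →
        (1 / 18) * ((Dp3 (Dp3 f) z) ^ 2 - 2 * Dp3 f z * Dp3 (Dp3 (Dp3 f)) z)
          + (1 / 6) * (Dy3 (Dp3 (Dp3 f)) z - Dtot f (Dp3 (Dp3 (Dp3 f))) z) = 0)) ↔
    (∃ A B C D : ℝ × ℝ → ℝ,
      ContDiffOn ℝ ∞ A U ∧ ContDiffOn ℝ ∞ B U ∧
      ContDiffOn ℝ ∞ C U ∧ ContDiffOn ℝ ∞ D U ∧
      (∀ x y p : ℝ, (x, y) ∈ U → f (x, y, p) =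
        A (x, y) * p ^ 3 + 3 * B (x, y) * p ^ 2 + 3 * C (x, y) * p + D (x, y)) ∧
      (∀ z ∈ U, pdy D z - pdx C z = 2 * (B z * D z - C z ^ 2)) ∧
      (∀ z ∈ U, pdy C z - pdx B z = A z * D z - B z * C z) ∧
      (∀ z ∈ U, pdy B z - pdx A z = 2 * (A z * C z - B z ^ 2))) := by
  have hScont : Continuous (fun z : ℝ × ℝ × ℝ => (z.1, z.2.1)) := by fun_prop
  have hS : IsOpen {z : ℝ × ℝ × ℝ | (z.1, z.2.1) ∈ U} := hU.preimage hScont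
  constructor
  · rintro ⟨hi, hii, hiii, hiv⟩
    -- smoothness of iterated p-derivatives
    have h1 : ContDiffOn ℝ ∞ (Dp3 f) {z : ℝ × ℝ × ℝ | (z.1, z.2.1) ∈ U} :=
      (hf.fderiv_of_isOpen hS (by simp)).clm_apply contDiffOn_const
    have h2 : ContDiffOn ℝ ∞ (Dp3 (Dp3 f)) {z : ℝ × ℝ × ℝ | (z.1, z.2.1) ∈ U} :=
      (h1.fderiv_of_isOpen hS (by simp)).clm_apply contDiffOn_const
    have h3 : ContDiffOn ℝ ∞ (Dp3 (Dp3 (Dp3 f))) {z : ℝ × ℝ × ℝ | (z.1, z.2.1) ∈ U} :=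
      (h2.fderiv_of_isOpen hS (by simp)).clm_apply contDiffOn_const
    have hDiffAt : ∀ (G : ℝ×ℝ×ℝ→ℝ), ContDiffOn ℝ ∞ G {z : ℝ × ℝ × ℝ | (z.1, z.2.1) ∈ U} →
        ∀ z ∈ {z : ℝ × ℝ × ℝ | (z.1, z.2.1) ∈ U}, DifferentiableAt ℝ G z := fun G hG z hz =>
      (hG.differentiableOn (by simp)).differentiableAt (hS.mem_nhds hz)
    -- the coefficients
    set A : ℝ × ℝ → ℝ := fun w => Dp3 (Dp3 (Dp3 f)) (w.1, w.2, 0) / 6 with hAdef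
    set B : ℝ × ℝ → ℝ := fun w => Dp3 (Dp3 f) (w.1, w.2, 0) / 6 with hBdef
    set C : ℝ × ℝ → ℝ := fun w => Dp3 f (w.1, w.2, 0) / 3 with hCdef
    set D : ℝ × ℝ → ℝ := fun w => f (w.1, w.2, 0) with hDdef
    have hι : ContDiff ℝ ∞ (fun w : ℝ × ℝ => ((w.1, w.2, (0:ℝ)) : ℝ×ℝ×ℝ)) :=
      contDiff_fst.prodMk (contDiff_snd.prodMk contDiff_const)
    have hmaps : Set.MapsTo (fun w : ℝ × ℝ => ((w.1, w.2, (0:ℝ)) : ℝ×ℝ×ℝ)) U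
        {z : ℝ × ℝ × ℝ | (z.1, z.2.1) ∈ U} := fun w hw => by simpa using hw
    have hAs : ContDiffOn ℝ ∞ A U := (h3.comp hι.contDiffOn hmaps).div_const 6
    have hBs : ContDiffOn ℝ ∞ B U := (h2.comp hι.contDiffOn hmaps).div_const 6
    have hCs : ContDiffOn ℝ ∞ C U := (h1.comp hι.contDiffOn hmaps).div_const 3
    have hDs : ContDiffOn ℝ ∞ D U := hf.comp hι.contDiffOn hmaps
    -- cubic structure in p
    have hcubfact : ∀ x y : ℝ, (x, y) ∈ U → ∀ p : ℝ, f (x, y, p) =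
        A (x, y) * p ^ 3 + 3 * B (x, y) * p ^ 2 + 3 * C (x, y) * p + D (x, y) := by
      intro x y hxy
      have hmem : ∀ p : ℝ, ((x, y, p) : ℝ×ℝ×ℝ) ∈ {z : ℝ × ℝ × ℝ | (z.1, z.2.1) ∈ U} :=
        fun p => hxy
      have hasD : ∀ (G : ℝ×ℝ×ℝ→ℝ), (∀ z ∈ {z : ℝ × ℝ × ℝ | (z.1, z.2.1) ∈ U},
          DifferentiableAt ℝ G z) → ∀ p : ℝ,
          HasDerivAt (fun t => G (x, y, t)) (Dp3 G (x, y, p)) p := fun G hG p =>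
        (hG _ (hmem p)).hasFDerivAt.comp_hasDerivAt p
          ((hasDerivAt_const p x).prodMk ((hasDerivAt_const p y).prodMk (hasDerivAt_id p)))
      set K3 : ℝ := Dp3 (Dp3 (Dp3 f)) (x, y, 0) with hK3
      set K2 : ℝ := Dp3 (Dp3 f) (x, y, 0) with hK2
      set K1 : ℝ := Dp3 f (x, y, 0) with hK1
      set K0 : ℝ := f (x, y, 0) with hK0
      have c3 : ∀ p : ℝ, Dp3 (Dp3 (Dp3 f)) (x, y, p) = K3 := fun p =>
        is_const_of_deriv_eq_zero
          (fun p => (hasD _ (hDiffAt _ h3) p).differentiableAt)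
          (fun p => by rw [(hasD _ (hDiffAt _ h3) p).deriv]; exact hi (x, y, p) (hmem p)) p 0
      have c2 : ∀ p : ℝ, Dp3 (Dp3 f) (x, y, p) = K3 * p + K2 := by
        intro p
        have hder : ∀ p : ℝ, HasDerivAt (fun t => Dp3 (Dp3 f) (x, y, t) - K3 * t)
            (Dp3 (Dp3 (Dp3 f)) (x, y, p) - K3 * 1) p := fun p =>
          (hasD _ (hDiffAt _ h2) p).sub ((hasDerivAt_id p).const_mul K3)
        have := is_const_of_deriv_eq_zero (fun p => (hder p).differentiableAt)
          (fun p => by rw [(hder p).deriv, c3 p]; ring) p 0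
        linarith [this]
      have c1 : ∀ p : ℝ, Dp3 f (x, y, p) = K3 / 2 * p ^ 2 + K2 * p + K1 := by
        intro p
        have hder : ∀ p : ℝ, HasDerivAt
            (fun t => Dp3 f (x, y, t) - K3 / 2 * t ^ 2 - K2 * t)
            (Dp3 (Dp3 f) (x, y, p) - K3 / 2 * ((2:ℕ) * p ^ 1) - K2 * 1) p := fun p =>
          ((hasD _ (hDiffAt _ h1) p).sub ((hasDerivAt_pow 2 p).const_mul (K3 / 2))).sub
            ((hasDerivAt_id p).const_mul K2)
        have := is_const_of_deriv_eq_zero (fun p => (hder p).differentiableAt)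
          (fun p => by rw [(hder p).deriv, c2 p]; push_cast; ring) p 0
        push_cast at this
        nlinarith [this]
      have c0 : ∀ p : ℝ, f (x, y, p) = K3 / 6 * p ^ 3 + K2 / 2 * p ^ 2 + K1 * p + K0 := by
        intro p
        have hder : ∀ p : ℝ, HasDerivAt
            (fun t => f (x, y, t) - K3 / 6 * t ^ 3 - K2 / 2 * t ^ 2 - K1 * t)
            (Dp3 f (x, y, p) - K3 / 6 * ((3:ℕ) * p ^ 2) - K2 / 2 * ((2:ℕ) * p ^ 1) - K1 * 1)
            p := fun p =>
          (((hasD _ (hDiffAt _ hf) p).sub ((hasDerivAt_pow 3 p).const_mul (K3 / 6))).sub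
            ((hasDerivAt_pow 2 p).const_mul (K2 / 2))).sub ((hasDerivAt_id p).const_mul K1)
        have := is_const_of_deriv_eq_zero (fun p => (hder p).differentiableAt)
          (fun p => by rw [(hder p).deriv, c1 p]; push_cast; ring) p 0
        push_cast at this
        nlinarith [this]
      intro p
      have hA' : A (x, y) = K3 / 6 := rfl
      have hB' : B (x, y) = K2 / 6 := rfl
      have hC' : C (x, y) = K1 / 3 := rfl
      have hD' : D (x, y) = K0 := rfl
      rw [hA', hB', hC', hD', c0 p]; ring
    have hfe : ∀ z : ℝ × ℝ × ℝ, (z.1, z.2.1) ∈ U → f z =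
        A (z.1, z.2.1) * z.2.2 ^ 3 + 3 * B (z.1, z.2.1) * z.2.2 ^ 2
          + 3 * C (z.1, z.2.1) * z.2.2 + D (z.1, z.2.1) :=
      fun z hz => hcubfact z.1 z.2.1 hz z.2.2
    have dA : ∀ w ∈ U, DifferentiableAt ℝ A w := fun w hw =>
      (hAs.differentiableOn (by simp)).differentiableAt (hU.mem_nhds hw)
    have dB : ∀ w ∈ U, DifferentiableAt ℝ B w := fun w hw =>
      (hBs.differentiableOn (by simp)).differentiableAt (hU.mem_nhds hw)
    have dC : ∀ w ∈ U, DifferentiableAt ℝ C w := fun w hw =>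
      (hCs.differentiableOn (by simp)).differentiableAt (hU.mem_nhds hw)
    have dD : ∀ w ∈ U, DifferentiableAt ℝ D w := fun w hw =>
      (hDs.differentiableOn (by simp)).differentiableAt (hU.mem_nhds hw)
    refine ⟨A, B, C, D, hAs, hBs, hCs, hDs, fun x y p hxy => hcubfact x y hxy p, ?_, ?_, ?_⟩
    all_goals {
      rintro ⟨x, y⟩ hw
      have K : ∀ p : ℝ,
          (pdy A (x,y) * p ^ 3 + 3 * pdy B (x,y) * p ^ 2 + 3 * pdy C (x,y) * p + pdy D (x,y))
          + (2/9) * (3 * A (x,y) * p ^ 2 + 6 * B (x,y) * p + 3 * C (x,y)) ^ 2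
          - (1/3) * ((3 * pdx A (x,y) * p ^ 2 + 6 * pdx B (x,y) * p + 3 * pdx C (x,y))
              + p * (3 * pdy A (x,y) * p ^ 2 + 6 * pdy B (x,y) * p + 3 * pdy C (x,y))
              + (A (x,y) * p ^ 3 + 3 * B (x,y) * p ^ 2 + 3 * C (x,y) * p + D (x,y))
                * (6 * A (x,y) * p + 6 * B (x,y))) = 0 := by
        intro p
        obtain ⟨F1, F2, F3, F4, F5, F6, F7, F8, F9, F10, F11⟩ :=
          formulas U hU A B C D dA dB dC dD f hfe (x, y, p) hw
        have h := hiii (x, y, p) hw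
        simp only [Dtot] at h
        rw [F5, F1, F6, F7, F2, hfe (x, y, p) hw] at h
        exact h
      first
      | linear_combination K 0
      | linear_combination (K 1 - K (-1)) / 4
      | linear_combination (K 1 + K (-1)) / 2 - K 0
    }
  · rintro ⟨A, B, C, D, hAs, hBs, hCs, hDs, hcub, hp1, hp2, hp3⟩
    have dA : ∀ w ∈ U, DifferentiableAt ℝ A w := fun w hw =>
      (hAs.differentiableOn (by simp)).differentiableAt (hU.mem_nhds hw)
    have dB : ∀ w ∈ U, DifferentiableAt ℝ B w := fun w hw =>
      (hBs.differentiableOn (by simp)).differentiableAt (hU.mem_nhds hw)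
    have dC : ∀ w ∈ U, DifferentiableAt ℝ C w := fun w hw =>
      (hCs.differentiableOn (by simp)).differentiableAt (hU.mem_nhds hw)
    have dD : ∀ w ∈ U, DifferentiableAt ℝ D w := fun w hw =>
      (hDs.differentiableOn (by simp)).differentiableAt (hU.mem_nhds hw)
    have hfe : ∀ z : ℝ × ℝ × ℝ, (z.1, z.2.1) ∈ U → f z =
        A (z.1, z.2.1) * z.2.2 ^ 3 + 3 * B (z.1, z.2.1) * z.2.2 ^ 2
          + 3 * C (z.1, z.2.1) * z.2.2 + D (z.1, z.2.1) :=
      fun z hz => hcub z.1 z.2.1 z.2.2 hz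
    have FF := fun z hz => formulas U hU A B C D dA dB dC dD f hfe z hz
    refine ⟨fun z hz => (FF z hz).2.2.2.1, fun z hz => ?_, fun z hz => ?_, fun z hz => ?_⟩
    · obtain ⟨F1, F2, F3, F4, F5, F6, F7, F8, F9, F10, F11⟩ := FF z hz
      simp only [Dtot]
      rw [F7, F1, F2, F8, F9, F3, hfe z hz]
      linear_combination (6 * z.2.2) * hp3 (z.1, z.2.1) hz + 6 * hp2 (z.1, z.2.1) hz
    · obtain ⟨F1, F2, F3, F4, F5, F6, F7, F8, F9, F10, F11⟩ := FF z hz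
      simp only [Dtot]
      rw [F5, F1, F6, F7, F2, hfe z hz]
      linear_combination z.2.2 ^ 2 * hp3 (z.1, z.2.1) hz + 2 * z.2.2 * hp2 (z.1, z.2.1) hz
        + hp1 (z.1, z.2.1) hz
    · obtain ⟨F1, F2, F3, F4, F5, F6, F7, F8, F9, F10, F11⟩ := FF z hz
      simp only [Dtot]
      rw [F2, F1, F3, F9, F10, F11, F4, hfe z hz]
      linear_combination hp3 (z.1, z.2.1) hz
end
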